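/- Let G be a separable Gurariy space. Then G has no nontrivial M-summand; that is, there do not exist nonzero closed linear subspaces M and N of G with G = M ⊕ N (algebraic direct sum) such that ‖m + n‖ = max(‖m‖, ‖n‖) for all m ∈ M and n ∈ N. -/

import Mathlib

lemma pi3_norm (x : Fin 3 → ℝ) : ‖x‖ = max |x 0| (max |x 1| |x 2|) := by
  apply le_antisymm
  · apply (pi_norm_le_iff_of_nonneg (by positivity)).2
    intro i
    fin_cases i
    · exact (Real.norm_eq_abs _).le.trans (le_max_left _ _)
    · exact (Real.norm_eq_abs _).le.trans (le_trans (le_max_left _ _) (le_max_right _ _))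
    · exact (Real.norm_eq_abs _).le.trans (le_trans (le_max_right _ _) (le_max_right _ _))
  · refine max_le ?_ (max_le ?_ ?_) <;>
      simpa [Real.norm_eq_abs] using norm_le_pi_norm x _



open TopologicalSpace

/-- `T` is an `ε`-isometry: `(1+ε)⁻¹‖x‖ ≤ ‖T x‖ ≤ (1+ε)‖x‖` for all `x`. -/
def IsEpsIsometry {X Y : Type*} [NormedAddCommGroup X] [NormedAddCommGroup Y]
    (ε : ℝ) (T : X → Y) : Prop :=
  ∀ x : X, (1 + ε)⁻¹ * ‖x‖ ≤ ‖T x‖ ∧ ‖T x‖ ≤ (1 + ε) * ‖x‖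

/-- `X` and `Y` are almost isometric: for every `ε > 0` there is a surjective linear
`ε`-isometry from `X` onto `Y`. -/
def AlmostIsometric (X Y : Type*) [NormedAddCommGroup X] [NormedSpace ℝ X]
    [NormedAddCommGroup Y] [NormedSpace ℝ Y] : Prop :=
  ∀ ε : ℝ, 0 < ε → ∃ T : X →ₗ[ℝ] Y, Function.Surjective T ∧ IsEpsIsometry ε ⇑T

/-- `X` is a Gurariy space: for every `ε > 0`, every pair of finite-dimensional normed
spaces `E ⊆ F` and every linear isometric embedding `T : E → X`, there is a linear
extension `S : F → X` of `T` which is an `ε`-isometry. -/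
def IsGurariy (X : Type*) [NormedAddCommGroup X] [NormedSpace ℝ X] : Prop :=
  ∀ ε : ℝ, 0 < ε →
    ∀ (F : Type) [NormedAddCommGroup F] [NormedSpace ℝ F] [FiniteDimensional ℝ F]
      (E : Subspace ℝ F) (T : E →ₗ[ℝ] X),
      (∀ e : E, ‖T e‖ = ‖e‖) →
      ∃ S : F →ₗ[ℝ] X, (∀ e : E, S e = T e) ∧ IsEpsIsometry ε ⇑S

/-- `Y` is an almost isometric ideal (a.i.-ideal) in `X`. -/
def IsAIIdeal {X : Type*} [NormedAddCommGroup X] [NormedSpace ℝ X]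
    (Y : Subspace ℝ X) : Prop :=
  IsClosed (Y : Set X) ∧
  ∀ ε : ℝ, 0 < ε → ∀ E : Subspace ℝ X, FiniteDimensional ℝ E →
    ∃ T : E →ₗ[ℝ] Y, (∀ e : E, (e : X) ∈ Y → ((T e : Y) : X) = (e : X)) ∧
      IsEpsIsometry ε ⇑T

/-- A separable Gurariy space `G` has no nontrivial `M`-summand: there are no nonzero
closed subspaces `M, N` of `G` with `G = M ⊕ N` algebraically and
`‖m + n‖ = max ‖m‖ ‖n‖` for all `m ∈ M`, `n ∈ N`. -/
theorem separable_gurariy_no_M_summand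
    (G : Type*) [NormedAddCommGroup G] [NormedSpace ℝ G] [CompleteSpace G]
    [SeparableSpace G] (hG : IsGurariy G) :
    ¬ ∃ M N : Subspace ℝ G,
        IsClosed (M : Set G) ∧ IsClosed (N : Set G) ∧
        M ≠ ⊥ ∧ N ≠ ⊥ ∧ IsCompl M N ∧
        ∀ m ∈ M, ∀ n ∈ N, ‖m + n‖ = max ‖m‖ ‖n‖ := by
  rintro ⟨M, N, -, -, hM0, hN0, hcompl, hnorm⟩
  -- unit vectors in M and N
  obtain ⟨m, hmM, hm1⟩ : ∃ m ∈ M, ‖m‖ = 1 := by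
    obtain ⟨m₀, hm₀M, hm₀⟩ := Submodule.exists_mem_ne_zero_of_ne_bot hM0
    exact ⟨‖m₀‖⁻¹ • m₀, M.smul_mem _ hm₀M, by
      rw [norm_smul, norm_inv, norm_norm, inv_mul_cancel₀ (norm_ne_zero_iff.2 hm₀)]⟩
  obtain ⟨n, hnN, hn1⟩ : ∃ n ∈ N, ‖n‖ = 1 := by
    obtain ⟨n₀, hn₀N, hn₀⟩ := Submodule.exists_mem_ne_zero_of_ne_bot hN0
    exact ⟨‖n₀‖⁻¹ • n₀, N.smul_mem _ hn₀N, by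
      rw [norm_smul, norm_inv, norm_norm, inv_mul_cancel₀ (norm_ne_zero_iff.2 hn₀)]⟩
  -- key norm formula
  have key : ∀ a b : ℝ, ‖a • m + b • n‖ = max |a| |b| := by
    intro a b
    rw [hnorm _ (M.smul_mem a hmM) _ (N.smul_mem b hnN), norm_smul, norm_smul, hm1, hn1,
      Real.norm_eq_abs, Real.norm_eq_abs, mul_one, mul_one]
  -- the model space F = ℝ³ with sup norm
  set φ : (Fin 3 → ℝ) →ₗ[ℝ] ℝ :=
    (LinearMap.proj 0 : (Fin 3 → ℝ) →ₗ[ℝ] ℝ) + LinearMap.proj 1 - (2 : ℝ) • LinearMap.proj 2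
    with hφ
  have hφ_apply : ∀ x : Fin 3 → ℝ, φ x = x 0 + x 1 - 2 * x 2 := by
    intro x; simp [hφ, smul_eq_mul]
  set E : Subspace ℝ (Fin 3 → ℝ) := LinearMap.ker φ with hE
  -- norm on E
  have hEnorm : ∀ x : Fin 3 → ℝ, x ∈ E → ‖x‖ = max |x 0| |x 1| := by
    intro x hx
    have h2 : x 2 = (x 0 + x 1) / 2 := by
      have := (LinearMap.mem_ker.1 hx)
      rw [hφ_apply] at this; linarith
    have hmid : |x 2| ≤ max |x 0| |x 1| := by
      rw [h2, abs_div]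
      rw [show |(2:ℝ)| = 2 by norm_num]
      have := abs_add_le (x 0) (x 1)
      have h0 := le_max_left |x 0| |x 1|
      have h1 := le_max_right |x 0| |x 1|
      linarith
    rw [pi3_norm]
    refine le_antisymm (max_le (le_max_left _ _) (max_le (le_max_right _ _) hmid))
      (max_le (le_max_left _ _) ((le_max_left _ _).trans (le_max_right _ _)))
  -- the map T
  set T : E →ₗ[ℝ] G :=
    LinearMap.smulRight ((LinearMap.proj 0).comp E.subtype) m +
      LinearMap.smulRight ((LinearMap.proj 1).comp E.subtype) n with hT
  have hT_apply : ∀ e : E, T e = (e : Fin 3 → ℝ) 0 • m + (e : Fin 3 → ℝ) 1 • n := by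
    intro e; simp [hT]
  have hTiso : ∀ e : E, ‖T e‖ = ‖e‖ := by
    intro e
    rw [hT_apply, key, ← hEnorm _ e.2]
    rfl
  obtain ⟨S, hSext, hSiso⟩ := hG (1/10) (by norm_num) (Fin 3 → ℝ) E T hTiso
  -- the vectors
  set e₁ : Fin 3 → ℝ := ![1, 0, 1/2] with he₁
  set e₂ : Fin 3 → ℝ := ![0, 1, 1/2] with he₂
  set f : Fin 3 → ℝ := ![1/2, 1/2, 1] with hf
  have he₁E : e₁ ∈ E := by
    rw [hE, LinearMap.mem_ker, hφ_apply]; norm_num [he₁, Matrix.cons_val_two, Matrix.tail_cons, Matrix.head_cons]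
  have he₂E : e₂ ∈ E := by
    rw [hE, LinearMap.mem_ker, hφ_apply]; norm_num [he₂, Matrix.cons_val_two, Matrix.tail_cons, Matrix.head_cons]
  have hSe₁ : S e₁ = m := by
    have := hSext ⟨e₁, he₁E⟩
    rw [hT_apply] at this
    simpa [he₁] using this
  have hSe₂ : S e₂ = n := by
    have := hSext ⟨e₂, he₂E⟩
    rw [hT_apply] at this
    simpa [he₂] using this
  set g : G := S f with hg
  -- norm computations
  have hnf : ‖f‖ = 1 := by rw [pi3_norm]; norm_num [hf, abs_of_nonneg, Matrix.cons_val_two, Matrix.tail_cons, Matrix.head_cons]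
  have hnf1 : ‖f - e₁‖ = 1/2 := by
    rw [pi3_norm]
    simp only [Pi.sub_apply, hf, he₁]
    norm_num [abs_of_nonneg, abs_of_nonpos, Matrix.cons_val_two, Matrix.tail_cons, Matrix.head_cons]
  have hnf2 : ‖f - e₂‖ = 1/2 := by
    rw [pi3_norm]
    simp only [Pi.sub_apply, hf, he₂]
    norm_num [abs_of_nonneg, abs_of_nonpos, Matrix.cons_val_two, Matrix.tail_cons, Matrix.head_cons]
  have hg_lb : (10 : ℝ)/11 ≤ ‖g‖ := by
    have := (hSiso f).1
    rw [hnf] at this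
    calc (10:ℝ)/11 = (1 + 1/10)⁻¹ * 1 := by norm_num
      _ ≤ ‖g‖ := this
  have hgm : ‖g - m‖ ≤ 11/20 := by
    have := (hSiso (f - e₁)).2
    rw [hnf1, map_sub, hSe₁] at this
    calc ‖g - m‖ ≤ (1 + 1/10) * (1/2) := this
      _ = 11/20 := by norm_num
  have hgn : ‖g - n‖ ≤ 11/20 := by
    have := (hSiso (f - e₂)).2
    rw [hnf2, map_sub, hSe₂] at this
    calc ‖g - n‖ ≤ (1 + 1/10) * (1/2) := this
      _ = 11/20 := by norm_num
  -- decompose g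
  obtain ⟨gM, gN, hgM, hgN, hsum⟩ := Submodule.codisjoint_iff_exists_add_eq.mp hcompl.codisjoint g
  have hgnorm : ‖g‖ = max ‖gM‖ ‖gN‖ := by rw [← hsum, hnorm _ hgM _ hgN]
  have : (10:ℝ)/11 ≤ max ‖gM‖ ‖gN‖ := hgnorm ▸ hg_lb
  rcases le_max_iff.1 this with hMn | hNn
  · -- ‖gM‖ ≥ 10/11; then ‖g - n‖ ≥ 10/11
    have : ‖g - n‖ = max ‖gM‖ ‖gN - n‖ := by
      rw [← hsum, show gM + gN - n = gM + (gN - n) by abel,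
        hnorm _ hgM _ (N.sub_mem hgN hnN)]
    have h1 : (10:ℝ)/11 ≤ ‖g - n‖ := this ▸ le_trans hMn (le_max_left _ _)
    linarith
  · have : ‖g - m‖ = max ‖gM - m‖ ‖gN‖ := by
      rw [← hsum, show gM + gN - m = (gM - m) + gN by abel,
        hnorm _ (M.sub_mem hgM hmM) _ hgN]
    have h1 : (10:ℝ)/11 ≤ ‖g - m‖ := this ▸ le_trans hNn (le_max_right _ _)
    linarith
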